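/- Let F be an algebraically closed field, let A be an n×n and B an m×m matrix over F (n, m ≥ 1). For γ ∈ F let ι_A(γ) denote the multiplicity of γ as a root of the minimal polynomial of A (and similarly ι_B(γ)). Call a matrix nilpotent if its minimal polynomial is a power of X, and define ρ = min(ι_A(0), ι_B(0)) if both A and B are nilpotent, ρ = ι_A(0) if A is nilpotent and B is not, ρ = ι_B(0) if B is nilpotent and A is not, and ρ = max(ι_A(0), ι_B(0)) if neither is nilpotent. Then the minimal polynomial of A ⊗ B equals X^ρ · Q, where Q is the (monic) least common multiple of the polynomials (X − αβ)^{ι_A(α) ∧ ι_B(β)} taken over all nonzero roots α of the minimal polynomial of A and all nonzero roots β of the minimal polynomial of B (with Q = 1 if this family is empty). -/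

import Mathlib

open Polynomial Matrix
open scoped Kronecker

open scoped Classical in
/-- For positive integers `s`, `t`, `wedge F s t` is the largest value of `i + j + 1` over
pairs `0 ≤ i ≤ s-1`, `0 ≤ j ≤ t-1` such that the binomial coefficient `C(i+j, i)`, viewed
as an element of `F`, is nonzero; moreover `wedge F s 0 = wedge F 0 t = 0`. -/
noncomputable def wedge (F : Type*) [Field F] (s t : ℕ) : ℕ :=
  ((Finset.range s) ×ˢ (Finset.range t)).sup
    (fun p => if (((p.1 + p.2).choose p.1 : F)) ≠ 0 then p.1 + p.2 + 1 else 0)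

set_option linter.unusedSectionVars false
set_option linter.unusedVariables false

section KV
variable {F : Type*} [Field F] {n m : Type*} [Fintype n] [Fintype m]

/-- Kronecker product of two vectors. -/
def kv {F n m : Type*} [Field F] (u : n → F) (w : m → F) : n × m → F :=
  fun p => u p.1 * w p.2

lemma kron_mulVec (A : Matrix n n F) (B : Matrix m m F) (u : n → F) (w : m → F) :
    (A ⊗ₖ B) *ᵥ kv u w = kv (A *ᵥ u) (B *ᵥ w) := by
  funext p
  obtain ⟨i, j⟩ := p
  simp only [Matrix.mulVec, dotProduct, kv, kroneckerMap_apply, Fintype.sum_prod_type]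
  rw [Finset.sum_mul_sum]
  exact Finset.sum_congr rfl fun a _ => Finset.sum_congr rfl fun b _ => by ring

lemma kv_zero_left (w : m → F) : kv (0 : n → F) w = 0 :=
  funext fun p => zero_mul _

lemma kv_zero_right (u : n → F) : kv u (0 : m → F) = 0 :=
  funext fun p => mul_zero _

lemma kv_smul_right (u : n → F) (c : F) (w : m → F) :
    kv u (c • w) = c • kv u w :=
  funext fun p => by simp [kv, mul_left_comm]

lemma kv_ne_zero {u : n → F} {w : m → F} (hu : u ≠ 0) (hw : w ≠ 0) :
    kv u w ≠ 0 := by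
  obtain ⟨a, ha⟩ := Function.ne_iff.mp hu
  obtain ⟨b, hb⟩ := Function.ne_iff.mp hw
  intro h
  have := congrFun h (a, b)
  simp only [kv, Pi.zero_apply] at this ha hb
  exact (mul_ne_zero ha hb) this

lemma kv_sum_sum {ι κ : Type*} (s : Finset ι) (t : Finset κ) (f : ι → n → F) (g : κ → m → F) :
    kv (∑ i ∈ s, f i) (∑ j ∈ t, g j) = ∑ i ∈ s, ∑ j ∈ t, kv (f i) (g j) := by
  funext p
  simp only [kv, Finset.sum_apply, Finset.sum_mul_sum]

lemma kron_pow [DecidableEq n] [DecidableEq m] (A : Matrix n n F) (B : Matrix m m F) (k : ℕ) :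
    (A ⊗ₖ B) ^ k = (A ^ k) ⊗ₖ (B ^ k) := by
  induction k with
  | zero => simp [Matrix.one_kronecker_one]
  | succ k ih => rw [pow_succ, ih, ← Matrix.mul_kronecker_mul, ← pow_succ, ← pow_succ]

lemma mulVec_sum' {ι : Type*} (N : Matrix n n F) (s : Finset ι) (f : ι → n → F) :
    N *ᵥ (∑ i ∈ s, f i) = ∑ i ∈ s, N *ᵥ f i := by
  simpa only [Matrix.mulVecLin_apply] using _root_.map_sum N.mulVecLin f s

lemma sum_mulVec' {ι : Type*} (s : Finset ι) (f : ι → Matrix n n F) (v : n → F) :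
    (∑ i ∈ s, f i) *ᵥ v = ∑ i ∈ s, f i *ᵥ v := by
  induction s using Finset.cons_induction with
  | empty => simp
  | cons a s ha ih => simp [Finset.sum_cons, Matrix.add_mulVec, ih]

end KV
open Polynomial Matrix Finset

lemma cast_mul_eq_smul {F R : Type*} [Field F] [Ring R] [Algebra F R] (x : R) (N : ℕ) :
    x * (N : R) = ((N : F)) • x := by
  rw [Nat.cast_smul_eq_nsmul F, nsmul_eq_mul']

lemma ring_expand {F R : Type*} [Field F] [Ring R] [Algebra F R] (p q : R)
    (h : Commute p q) (α β : F) (K : ℕ) :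
    (β • p + α • q + p * q) ^ K =
      ∑ k ∈ range (K + 1), ∑ l ∈ range (K - k + 1),
        (((K.choose k * (K - k).choose l : ℕ) : F) * β ^ k * α ^ (K - k - l)) •
          (p ^ (k + l) * q ^ (K - k)) := by
  have key : β • p + α • q + p * q = β • p + (α • (1 : R) + p) * q := by
    rw [add_mul, smul_mul_assoc, one_mul, add_assoc]
  have hc1 : Commute (α • (1 : R) + p) q := ((Commute.one_left q).smul_left α).add_left h
  have hc : Commute (β • p) ((α • (1 : R) + p) * q) :=
    ((((Commute.one_right p).smul_right α).add_right (Commute.refl p)).smul_left β).mul_right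
      (h.smul_left β)
  rw [key, hc.add_pow]
  refine Finset.sum_congr rfl fun k hk => ?_
  have hbin : (α • (1 : R) + p) ^ (K - k) =
      ∑ l ∈ range (K - k + 1), ((((K - k).choose l : ℕ) : F) * α ^ (K - k - l)) • p ^ l := by
    rw [add_comm (α • (1:R)) p, ((Commute.one_right p).smul_right α).add_pow]
    refine Finset.sum_congr rfl fun l hl => ?_
    rw [_root_.smul_pow, one_pow, cast_mul_eq_smul (F := F), mul_smul_comm, smul_smul, mul_one]
  rw [_root_.smul_pow β p k, hc1.mul_pow, hbin, cast_mul_eq_smul (F := F)]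
  simp only [Finset.sum_mul, Finset.mul_sum, smul_mul_assoc, mul_smul_comm, smul_smul]
  rw [Finset.smul_sum]
  refine Finset.sum_congr rfl fun l hl => ?_
  rw [smul_smul, pow_add, Nat.cast_mul, ← mul_assoc (p ^ k)]
  congr 1
  ring

section Wedge
variable (F : Type*) [Field F]

lemma wedge_le {s t : ℕ} {i j : ℕ} (hi : i < s) (hj : j < t)
    (h : (((i + j).choose i : ℕ) : F) ≠ 0) : i + j + 1 ≤ wedge F s t := by
  classical
  have hmem : (i, j) ∈ (Finset.range s) ×ˢ (Finset.range t) := by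
    simp [Finset.mem_product, hi, hj]
  have := Finset.le_sup (f := fun p : ℕ × ℕ =>
    if (((p.1 + p.2).choose p.1 : F)) ≠ 0 then p.1 + p.2 + 1 else 0) hmem
  dsimp only at this
  rw [if_pos h] at this
  rw [wedge]
  exact this

lemma wedge_pos {s t : ℕ} (hs : 0 < s) (ht : 0 < t) : 0 < wedge F s t := by
  have := wedge_le F hs ht (i := 0) (j := 0) (by simp)
  omega

lemma wedge_spec {s t : ℕ} (hs : 0 < s) (ht : 0 < t) :
    ∃ i j : ℕ, i < s ∧ j < t ∧ i + j + 1 = wedge F s t ∧ (((i + j).choose i : ℕ) : F) ≠ 0 := by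
  classical
  obtain ⟨p, hp, hsup⟩ := Finset.exists_mem_eq_sup ((Finset.range s) ×ˢ (Finset.range t))
    ⟨(0, 0), by simp [hs, ht]⟩
    (fun p : ℕ × ℕ => if (((p.1 + p.2).choose p.1 : F)) ≠ 0 then p.1 + p.2 + 1 else 0)
  have hw : wedge F s t =
      if (((p.1 + p.2).choose p.1 : F)) ≠ 0 then p.1 + p.2 + 1 else 0 := by
    rw [wedge]; exact hsup
  have hpos := wedge_pos F hs ht
  by_cases hc : (((p.1 + p.2).choose p.1 : F)) ≠ 0
  · rw [if_pos hc] at hw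
    obtain ⟨hp1, hp2⟩ := Finset.mem_product.mp hp
    exact ⟨p.1, p.2, Finset.mem_range.mp hp1, Finset.mem_range.mp hp2, hw.symm, hc⟩
  · rw [if_neg hc] at hw; omega

lemma choose_swap (K k l : ℕ) (h : k + l ≤ K) :
    K.choose k * (K - k).choose l = K.choose (k + l) * (k + l).choose k := by
  have := Nat.choose_mul (n := K) (k := k + l) (s := k) (Nat.le_add_right k l)
  simpa [Nat.add_sub_cancel_left] using this.symm

lemma comb_zero {s t k l : ℕ} (hkl : k + l ≤ wedge F s t) (h1 : k + l < s)
    (h2 : wedge F s t - k < t) :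
    (((wedge F s t).choose k * (wedge F s t - k).choose l : ℕ) : F) = 0 := by
  set K := wedge F s t with hK
  by_contra hne
  rw [choose_swap K k l hkl, Nat.cast_mul] at hne
  have hC : ((K.choose (k + l) : ℕ) : F) ≠ 0 := fun h => hne (by rw [h, zero_mul])
  have hj : K - (k + l) < t := lt_of_le_of_lt (Nat.sub_le_sub_left (Nat.le_add_right k l) K) h2
  have hsum : (k + l) + (K - (k + l)) = K := Nat.add_sub_cancel' hkl
  have := wedge_le F h1 hj (by rw [hsum]; exact hC)
  omega

end Wedge

section Expand
variable {F : Type*} [Field F] {n m : Type*} [Fintype n] [Fintype m] [DecidableEq n] [DecidableEq m]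

lemma kron_commute (A' : Matrix n n F) (B' : Matrix m m F) :
    Commute (A' ⊗ₖ (1 : Matrix m m F)) ((1 : Matrix n n F) ⊗ₖ B') := by
  unfold Commute SemiconjBy
  rw [← Matrix.mul_kronecker_mul, ← Matrix.mul_kronecker_mul, one_mul, mul_one, one_mul, mul_one]

lemma kron_pow_mul_pow (A' : Matrix n n F) (B' : Matrix m m F) (i j : ℕ) :
    (A' ⊗ₖ (1 : Matrix m m F)) ^ i * ((1 : Matrix n n F) ⊗ₖ B') ^ j = (A' ^ i) ⊗ₖ (B' ^ j) := by
  rw [kron_pow, kron_pow, one_pow, one_pow, ← Matrix.mul_kronecker_mul, mul_one, one_mul]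

lemma kron_decomp (A : Matrix n n F) (B : Matrix m m F) (α β : F) :
    A ⊗ₖ B - (α * β) • (1 : Matrix (n × m) (n × m) F) =
      β • ((A - α • 1) ⊗ₖ (1 : Matrix m m F)) + α • ((1 : Matrix n n F) ⊗ₖ (B - β • 1)) +
        ((A - α • 1) ⊗ₖ (1 : Matrix m m F)) * ((1 : Matrix n n F) ⊗ₖ (B - β • 1)) := by
  rw [← Matrix.mul_kronecker_mul, mul_one, one_mul]
  ext ⟨i, j⟩ ⟨a, b⟩
  simp only [Matrix.sub_apply, Matrix.add_apply, Matrix.smul_apply, Matrix.kroneckerMap_apply,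
    Matrix.one_apply, Prod.mk.injEq, smul_eq_mul]
  by_cases hia : i = a <;> by_cases hjb : j = b <;> simp [hia, hjb] <;> ring

lemma expand_mulVec (A : Matrix n n F) (B : Matrix m m F) (α β : F) (u : n → F) (w : m → F)
    (K : ℕ) :
    ((A ⊗ₖ B - (α * β) • 1) ^ K) *ᵥ kv u w =
      ∑ k ∈ range (K + 1), ∑ l ∈ range (K - k + 1),
        (((K.choose k * (K - k).choose l : ℕ) : F) * β ^ k * α ^ (K - k - l)) •
          kv (((A - α • 1) ^ (k + l)) *ᵥ u) (((B - β • 1) ^ (K - k)) *ᵥ w) := by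
  rw [kron_decomp, ring_expand _ _ (kron_commute (A - α • 1) (B - β • 1)) α β K, sum_mulVec']
  refine Finset.sum_congr rfl fun k hk => ?_
  rw [sum_mulVec']
  refine Finset.sum_congr rfl fun l hl => ?_
  rw [Matrix.smul_mulVec, kron_pow_mul_pow, kron_mulVec]

end Expand

section Core
variable {F : Type*} [Field F] {n m : Type*} [Fintype n] [Fintype m] [DecidableEq n] [DecidableEq m]

lemma mulVec_smul' {d : Type*} [Fintype d] (N : Matrix d d F) (c : F) (v : d → F) :
    N *ᵥ (c • v) = c • (N *ᵥ v) := by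
  simpa only [Matrix.mulVecLin_apply] using _root_.map_smul N.mulVecLin c v

lemma pow_mulVec_eq_zero_of_le {d : Type*} [Fintype d] [DecidableEq d] {N : Matrix d d F} {u : d → F} {a : ℕ}
    (h : N ^ a *ᵥ u = 0) {b : ℕ} (hab : a ≤ b) : N ^ b *ᵥ u = 0 := by
  rw [← Nat.sub_add_cancel hab, pow_add, ← mulVec_mulVec, h, mulVec_zero]

lemma core_upper (A : Matrix n n F) (B : Matrix m m F) (α β : F) {s t : ℕ} {u : n → F}
    {w : m → F} (hu : ((A - α • 1) ^ s) *ᵥ u = 0) (hw : ((B - β • 1) ^ t) *ᵥ w = 0) :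
    ((A ⊗ₖ B - (α * β) • 1) ^ (wedge F s t)) *ᵥ kv u w = 0 := by
  rw [expand_mulVec]
  set K := wedge F s t with hK
  refine Finset.sum_eq_zero fun k hk => Finset.sum_eq_zero fun l hl => ?_
  rw [Finset.mem_range] at hk hl
  by_cases h1 : s ≤ k + l
  · rw [pow_mulVec_eq_zero_of_le hu h1, kv_zero_left, smul_zero]
  · by_cases h2 : t ≤ K - k
    · rw [pow_mulVec_eq_zero_of_le hw h2, kv_zero_right, smul_zero]
    · have hc := comb_zero F (s := s) (t := t) (k := k) (l := l) (by omega) (by omega) (by omega)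
      rw [← hK] at hc
      rw [hc, zero_mul, zero_mul, zero_smul]

lemma core_lower (A : Matrix n n F) (B : Matrix m m F) {α β : F} (hα : α ≠ 0) (hβ : β ≠ 0)
    {s t : ℕ} (hs : 0 < s) (ht : 0 < t) {u : n → F} {w : m → F}
    (hu0 : ((A - α • 1) ^ s) *ᵥ u = 0) (hu1 : ((A - α • 1) ^ (s - 1)) *ᵥ u ≠ 0)
    (hw0 : ((B - β • 1) ^ t) *ᵥ w = 0) (hw1 : ((B - β • 1) ^ (t - 1)) *ᵥ w ≠ 0) :
    ((A ⊗ₖ B - (α * β) • 1) ^ (wedge F s t - 1)) *ᵥ kv u w ≠ 0 := by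
  obtain ⟨i0, j0, hi0, hj0, hij, hch⟩ := wedge_spec F hs ht
  set K := wedge F s t with hK
  intro hzero
  have hval : (((A - α • 1) ^ (s - 1 - i0)) ⊗ₖ ((B - β • 1) ^ (t - 1 - j0))) *ᵥ
      (((A ⊗ₖ B - (α * β) • 1) ^ (K - 1)) *ᵥ kv u w)
      = ((((K - 1).choose i0 * ((K - 1 - i0).choose 0) : ℕ) : F) * β ^ i0 * α ^ (K - 1 - i0 - 0)) •
        kv (((A - α • 1) ^ (s - 1)) *ᵥ u) (((B - β • 1) ^ (t - 1)) *ᵥ w) := by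
    rw [expand_mulVec, mulVec_sum']
    rw [Finset.sum_eq_single i0]
    · rw [mulVec_sum', Finset.sum_eq_single 0]
      · rw [mulVec_smul', kron_mulVec, mulVec_mulVec, mulVec_mulVec, ← pow_add, ← pow_add]
        have e1 : s - 1 - i0 + (i0 + 0) = s - 1 := by omega
        have e2 : t - 1 - j0 + (K - 1 - i0) = t - 1 := by omega
        rw [e1, e2]
      · intro l hl hlne
        rw [mulVec_smul', kron_mulVec, mulVec_mulVec, ← pow_add,
          pow_mulVec_eq_zero_of_le hu0 (by omega), kv_zero_left, smul_zero]
      · intro h0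
        exact absurd (Finset.mem_range.mpr (by omega)) h0
    · intro k hk hkne
      rw [Finset.mem_range] at hk
      rw [mulVec_sum']
      refine Finset.sum_eq_zero fun l hl => ?_
      rw [Finset.mem_range] at hl
      rcases lt_or_gt_of_ne hkne with hlt | hgt
      · rw [mulVec_smul', kron_mulVec, mulVec_mulVec (M := (B - β • 1) ^ (t - 1 - j0)), ← pow_add,
          pow_mulVec_eq_zero_of_le hw0 (by omega), kv_zero_right, smul_zero]
      · rw [mulVec_smul', kron_mulVec, mulVec_mulVec (M := (A - α • 1) ^ (s - 1 - i0)), ← pow_add,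
          pow_mulVec_eq_zero_of_le hu0 (by omega), kv_zero_left, smul_zero]
    · intro h0
      exact absurd (Finset.mem_range.mpr (by omega)) h0
  rw [hzero, mulVec_zero] at hval
  have hcne : ((((K - 1).choose i0 * ((K - 1 - i0).choose 0) : ℕ) : F) * β ^ i0 *
      α ^ (K - 1 - i0 - 0)) ≠ 0 := by
    have h1 : (K - 1).choose i0 = (i0 + j0).choose i0 := by congr 1; omega
    rw [h1, Nat.choose_zero_right, mul_one]
    exact mul_ne_zero (mul_ne_zero hch (pow_ne_zero _ hβ)) (pow_ne_zero _ hα)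
  exact kv_ne_zero hu1 hw1 (smul_right_injective _ hcne (hval.symm.trans (smul_zero _).symm) ▸ rfl)

end Core

section MinpolySec
variable {F : Type*} [Field F] {d : Type*} [Fintype d] [DecidableEq d]

lemma aeval_X_sub_C_pow (M : Matrix d d F) (γ : F) (k : ℕ) :
    aeval M ((X - C γ) ^ k) = (M - γ • 1) ^ k := by
  rw [_root_.map_pow, _root_.map_sub, aeval_X, aeval_C, Algebra.algebraMap_eq_smul_one]

lemma exists_mulVec_ne_zero {N : Matrix d d F} (h : N ≠ 0) : ∃ v, N *ᵥ v ≠ 0 := by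
  by_contra hc
  push_neg at hc
  apply h
  ext i j
  have := congrFun (hc (Pi.single j 1)) i
  rw [Matrix.mulVec_single] at this
  simpa using this

lemma key_dvd [Nonempty d] (M : Matrix d d F) (γ : F) (v : d → F) (Kk r : ℕ)
    (h0 : ((M - γ • 1) ^ Kk) *ᵥ v = 0) (h1 : ((M - γ • 1) ^ (r - 1)) *ᵥ v ≠ 0) :
    (X - C γ) ^ r ∣ minpoly F M := by
  have hint : IsIntegral F M := Matrix.isIntegral M
  have hne : minpoly F M ≠ 0 := minpoly.ne_zero hint
  rw [← Polynomial.le_rootMultiplicity_iff hne]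
  by_contra hlt
  push_neg at hlt
  set e := (minpoly F M).rootMultiplicity γ with he
  set q := (minpoly F M) /ₘ ((X - C γ) ^ e) with hq
  have hfac : (X - C γ) ^ e * q = minpoly F M :=
    Polynomial.pow_mul_divByMonic_rootMultiplicity_eq _ γ
  have hqroot : ¬ (X - C γ) ∣ q := by
    intro hdvd
    have hev := Polynomial.eval_divByMonic_pow_rootMultiplicity_ne_zero γ hne
    rw [Polynomial.dvd_iff_isRoot] at hdvd
    exact hev hdvd
  have hcop : IsCoprime ((X - C γ) ^ Kk) q :=
    (((Polynomial.irreducible_X_sub_C γ).coprime_iff_not_dvd).mpr hqroot).pow_left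
  obtain ⟨a, b, hab⟩ := hcop
  have h2 : (aeval M (a * (X - C γ) ^ Kk)) *ᵥ v = 0 := by
    rw [_root_.map_mul, aeval_X_sub_C_pow, ← mulVec_mulVec, h0, mulVec_zero]
  have h3 : (aeval M (a * (X - C γ) ^ Kk + b * q)) *ᵥ v = v := by
    rw [hab, _root_.map_one, one_mulVec]
  rw [_root_.map_add, Matrix.add_mulVec, h2, zero_add] at h3
  have h4 : ((M - γ • 1) ^ e) *ᵥ v = 0 := by
    calc ((M - γ • 1) ^ e) *ᵥ v = ((M - γ • 1) ^ e) *ᵥ ((aeval M (b * q)) *ᵥ v) := by rw [h3]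
      _ = (aeval M ((X - C γ) ^ e * (b * q))) *ᵥ v := by
          rw [mulVec_mulVec, ← aeval_X_sub_C_pow, ← _root_.map_mul]
      _ = (aeval M (b * ((X - C γ) ^ e * q))) *ᵥ v := by ring_nf
      _ = 0 := by rw [hfac, _root_.map_mul, minpoly.aeval, mul_zero, zero_mulVec]
  exact h1 (pow_mulVec_eq_zero_of_le h4 (by omega))

lemma exists_cyclic [Nonempty d] (M : Matrix d d F) {γ : F} (hroot : (minpoly F M).IsRoot γ) :
    ∃ u, ((M - γ • 1) ^ ((minpoly F M).rootMultiplicity γ)) *ᵥ u = 0 ∧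
      ((M - γ • 1) ^ ((minpoly F M).rootMultiplicity γ - 1)) *ᵥ u ≠ 0 := by
  have hint : IsIntegral F M := Matrix.isIntegral M
  have hne : minpoly F M ≠ 0 := minpoly.ne_zero hint
  set e := (minpoly F M).rootMultiplicity γ with he
  have hepos : 0 < e := (Polynomial.rootMultiplicity_pos hne).mpr hroot
  set q := (minpoly F M) /ₘ ((X - C γ) ^ e) with hqdef
  have hfac : (X - C γ) ^ e * q = minpoly F M :=
    Polynomial.pow_mul_divByMonic_rootMultiplicity_eq _ γ
  have hqne : q ≠ 0 := by
    intro h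
    apply hne
    rw [← hfac, h, mul_zero]
  have hXne : (X - C γ : F[X]) ≠ 0 := Polynomial.X_sub_C_ne_zero γ
  have hgne : aeval M ((X - C γ) ^ (e - 1) * q) ≠ 0 := by
    intro h0
    have hdvd := minpoly.dvd F M h0
    have hzero := Polynomial.eq_zero_of_dvd_of_degree_lt hdvd (by
      apply Polynomial.degree_lt_degree
      have h1 : ((X - C γ) ^ (e - 1) * q).natDegree = (e - 1) + q.natDegree := by
        rw [Polynomial.natDegree_mul (pow_ne_zero _ hXne) hqne, Polynomial.natDegree_pow,
          Polynomial.natDegree_X_sub_C, mul_one]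
      have h2 : (minpoly F M).natDegree = e + q.natDegree := by
        rw [← hfac, Polynomial.natDegree_mul (pow_ne_zero _ hXne) hqne, Polynomial.natDegree_pow,
          Polynomial.natDegree_X_sub_C, mul_one]
      omega)
    exact (mul_ne_zero (pow_ne_zero _ hXne) hqne) hzero
  obtain ⟨v, hv⟩ := exists_mulVec_ne_zero hgne
  refine ⟨(aeval M q) *ᵥ v, ?_, ?_⟩
  · rw [mulVec_mulVec, ← aeval_X_sub_C_pow, ← _root_.map_mul, hfac, minpoly.aeval, zero_mulVec]
  · rw [mulVec_mulVec, ← aeval_X_sub_C_pow, ← _root_.map_mul]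
    exact hv

lemma nilp_eq_pow [Nonempty d] {M : Matrix d d F} (h : ∃ k, minpoly F M = X ^ k) :
    minpoly F M = X ^ ((minpoly F M).rootMultiplicity 0) := by
  obtain ⟨k, hk⟩ := h
  have : (X : F[X]) = X - C 0 := by rw [_root_.map_zero, sub_zero]
  rw [hk, this, Polynomial.rootMultiplicity_X_sub_C_pow]

lemma exists_ne_zero_root [IsAlgClosed F] [Nonempty d] (M : Matrix d d F)
    (h : ¬ ∃ k, minpoly F M = X ^ k) : ∃ β, β ≠ 0 ∧ (minpoly F M).IsRoot β := by
  by_contra hc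
  push_neg at hc
  apply h
  have hint : IsIntegral F M := Matrix.isIntegral M
  have hmonic := minpoly.monic hint
  have hprod := (IsAlgClosed.splits _).eq_prod_roots_of_monic hmonic
  refine ⟨Multiset.card (minpoly F M).roots, ?_⟩
  have hzero : ∀ a ∈ (minpoly F M).roots, X - C a = (X : F[X]) := by
    intro a ha
    have ha0 : a = 0 := by
      by_contra h0
      exact hc a h0 (Polynomial.isRoot_of_mem_roots ha)
    rw [ha0, _root_.map_zero, sub_zero]
  rw [hprod, Multiset.map_congr rfl hzero]
  simp

end MinpolySec

section Decomp
variable {F : Type*} [Field F] {d : Type*} [Fintype d] [DecidableEq d]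

lemma bezout_family [DecidableEq F] (S : Finset F) (hS : S.Nonempty) (mm : F → ℕ) :
    ∃ c : F → F[X], ∑ γ ∈ S, c γ * ∏ δ ∈ S.erase γ, (X - C δ) ^ (mm δ) = 1 := by
  classical
  induction S using Finset.induction with
  | empty => exact absurd hS (by simp)
  | @insert γ0 S' hγ0 ih =>
    by_cases hS' : S'.Nonempty
    · obtain ⟨c', hc'⟩ := ih hS'
      have hcop : IsCoprime ((X - C γ0) ^ (mm γ0)) (∏ δ ∈ S', (X - C δ) ^ (mm δ)) := by
        apply IsCoprime.pow_left
        apply IsCoprime.prod_right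
        intro δ hδ
        have hne : γ0 ≠ δ := fun h => hγ0 (h ▸ hδ)
        exact (Polynomial.isCoprime_X_sub_C_of_isUnit_sub
          (isUnit_iff_ne_zero.mpr (sub_ne_zero_of_ne hne))).pow_right
      obtain ⟨a, b, hab⟩ := hcop
      refine ⟨fun γ => if γ = γ0 then b else a * c' γ, ?_⟩
      rw [Finset.sum_insert hγ0]
      dsimp only
      rw [if_pos rfl, Finset.erase_insert hγ0]
      have hrest : ∑ γ ∈ S', (if γ = γ0 then b else a * c' γ) *
            ∏ δ ∈ (insert γ0 S').erase γ, (X - C δ) ^ mm δ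
          = (X - C γ0) ^ mm γ0 *
            (a * ∑ γ ∈ S', c' γ * ∏ δ ∈ S'.erase γ, (X - C δ) ^ mm δ) := by
        rw [Finset.mul_sum, Finset.mul_sum]
        refine Finset.sum_congr rfl fun γ hγ => ?_
        have hne : γ ≠ γ0 := fun h => hγ0 (h ▸ hγ)
        rw [if_neg hne]
        have herase : (insert γ0 S').erase γ = insert γ0 (S'.erase γ) :=
          Finset.erase_insert_of_ne hne.symm
        rw [herase, Finset.prod_insert (fun hcon => hγ0 (Finset.mem_of_mem_erase hcon))]
        ring
      rw [hrest, hc', mul_one]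
      linear_combination hab
    · have hempty : S' = ∅ := Finset.not_nonempty_iff_eq_empty.mp hS'
      subst hempty
      exact ⟨fun _ => 1, by simp⟩

lemma decomp [DecidableEq F] [IsAlgClosed F] [Nonempty d] (N : Matrix d d F) (u : d → F) :
    ∃ v : F → (d → F),
      (∀ γ, ((N - γ • 1) ^ ((minpoly F N).rootMultiplicity γ)) *ᵥ v γ = 0) ∧
      u = ∑ γ ∈ (minpoly F N).roots.toFinset, v γ := by
  classical
  have hint : IsIntegral F N := Matrix.isIntegral N
  have hne : minpoly F N ≠ 0 := minpoly.ne_zero hint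
  have hmonic := minpoly.monic hint
  have hdeg : 0 < (minpoly F N).natDegree := minpoly.natDegree_pos hint
  have hprod : minpoly F N = ∏ γ ∈ (minpoly F N).roots.toFinset,
      (X - C γ) ^ ((minpoly F N).rootMultiplicity γ) := by
    conv_lhs => rw [(IsAlgClosed.splits _).eq_prod_roots_of_monic hmonic]
    rw [Finset.prod_multiset_map_count]
    exact Finset.prod_congr rfl fun γ _ => by rw [Polynomial.count_roots]
  have hSne : (minpoly F N).roots.toFinset.Nonempty := by
    have hdne : (minpoly F N).degree ≠ 0 := by
      rw [Polynomial.degree_eq_natDegree hne]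
      simp only [ne_eq, Nat.cast_eq_zero]
      omega
    obtain ⟨γ, hγ⟩ := IsAlgClosed.exists_root (minpoly F N) hdne
    exact ⟨γ, by rw [Multiset.mem_toFinset, Polynomial.mem_roots']; exact ⟨hne, hγ⟩⟩
  obtain ⟨c, hc⟩ := bezout_family (minpoly F N).roots.toFinset hSne
    (fun γ => (minpoly F N).rootMultiplicity γ)
  set S := (minpoly F N).roots.toFinset with hSdef
  refine ⟨fun γ => if γ ∈ S then
      (aeval N (c γ * ∏ δ ∈ S.erase γ, (X - C δ) ^ ((minpoly F N).rootMultiplicity δ))) *ᵥ u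
    else 0, ?_, ?_⟩
  · intro γ
    dsimp only
    by_cases hγ : γ ∈ S
    · rw [if_pos hγ, mulVec_mulVec, ← aeval_X_sub_C_pow, ← _root_.map_mul]
      have hkey : (X - C γ) ^ ((minpoly F N).rootMultiplicity γ) *
          (c γ * ∏ δ ∈ S.erase γ, (X - C δ) ^ ((minpoly F N).rootMultiplicity δ))
          = c γ * minpoly F N := by
        rw [mul_left_comm, Finset.mul_prod_erase S (fun δ => (X - C δ) ^ ((minpoly F N).rootMultiplicity δ)) hγ, ← hprod]
      rw [hkey, _root_.map_mul, minpoly.aeval, mul_zero, zero_mulVec]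
    · rw [if_neg hγ, mulVec_zero]
  · dsimp only
    rw [Finset.sum_congr rfl (fun γ hγ => if_pos hγ), ← sum_mulVec', ← _root_.map_sum, hc,
      _root_.map_one, one_mulVec]

end Decomp

section Helpers
variable {F : Type*} [Field F] {n m : Type*} [Fintype n] [Fintype m] [DecidableEq n] [DecidableEq m]

lemma pow_mulVec_ne_zero_of_le {d : Type*} [Fintype d] [DecidableEq d] {N : Matrix d d F}
    {u : d → F} {a : ℕ} (h : N ^ a *ᵥ u ≠ 0) {b : ℕ} (hba : b ≤ a) : N ^ b *ᵥ u ≠ 0 :=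
  fun h0 => h (pow_mulVec_eq_zero_of_le h0 hba)

lemma matrix_eq_zero {d : Type*} [Fintype d] [DecidableEq d] {N : Matrix d d F}
    (h : ∀ j, N *ᵥ Pi.single j 1 = 0) : N = 0 := by
  ext i j
  have := congrFun (h j) i
  rw [Matrix.mulVec_single] at this
  simpa using this

lemma single_prod_eq_kv (a : n) (b : m) :
    (Pi.single (a, b) 1 : n × m → F) = kv (Pi.single a 1) (Pi.single b 1) := by
  funext p
  obtain ⟨x, y⟩ := p
  by_cases hx : x = a <;> by_cases hy : y = b <;>
    simp [kv, Pi.single_apply, Prod.ext_iff, hx, hy]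

lemma annih_of_dvd {d : Type*} [Fintype d] [DecidableEq d] (M : Matrix d d F) (f g : F[X])
    (hfg : f ∣ g) (v : d → F) (hv : (aeval M f) *ᵥ v = 0) : (aeval M g) *ᵥ v = 0 := by
  obtain ⟨c, rfl⟩ := hfg
  rw [mul_comm, _root_.map_mul, ← mulVec_mulVec, hv, mulVec_zero]

lemma minpoly_kron_comm (A : Matrix n n F) (B : Matrix m m F) :
    minpoly F (A ⊗ₖ B) = minpoly F (B ⊗ₖ A) := by
  have h : (Matrix.reindexAlgEquiv F F (Equiv.prodComm n m)) (A ⊗ₖ B) = B ⊗ₖ A := by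
    ext p q
    obtain ⟨i, j⟩ := p; obtain ⟨a, b⟩ := q
    simp [Matrix.reindexAlgEquiv_apply, Matrix.reindex_apply, Matrix.submatrix_apply,
      kroneckerMap_apply, mul_comm]
  rw [← h, minpoly.algEquiv_eq]

lemma eigvec_of_root (B : Matrix m m F) [Nonempty m] {β : F} (hroot : (minpoly F B).IsRoot β) :
    ∃ w : m → F, w ≠ 0 ∧ ∀ k : ℕ, (B ^ k) *ᵥ w = β ^ k • w := by
  obtain ⟨w0, hw0, hw1⟩ := exists_cyclic B hroot
  set t := (minpoly F B).rootMultiplicity β with ht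
  have hpos : 0 < t :=
    (Polynomial.rootMultiplicity_pos (minpoly.ne_zero (Matrix.isIntegral B))).mpr hroot
  refine ⟨((B - β • 1) ^ (t - 1)) *ᵥ w0, hw1, ?_⟩
  have hw : (B - β • 1) *ᵥ (((B - β • 1) ^ (t - 1)) *ᵥ w0) = 0 := by
    rw [mulVec_mulVec, ← pow_succ', show t - 1 + 1 = t from by omega]
    exact hw0
  have hB : B *ᵥ (((B - β • 1) ^ (t - 1)) *ᵥ w0) = β • (((B - β • 1) ^ (t - 1)) *ᵥ w0) := by
    rw [Matrix.sub_mulVec, sub_eq_zero, Matrix.smul_mulVec, one_mulVec] at hw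
    exact hw
  intro k
  induction k with
  | zero => simp
  | succ k ih =>
      rw [pow_succ', ← mulVec_mulVec, ih, mulVec_smul', hB, smul_smul, ← pow_succ]

lemma rho_dvd_nilp_nonnilp [IsAlgClosed F] [Nonempty n] [Nonempty m]
    (A : Matrix n n F) (B : Matrix m m F)
    (hA0 : (minpoly F A).IsRoot 0) (hnb : ¬ ∃ k, minpoly F B = X ^ k) :
    X ^ ((minpoly F A).rootMultiplicity 0) ∣ minpoly F (A ⊗ₖ B) := by
  obtain ⟨u, hu0, hu1⟩ := exists_cyclic A hA0
  obtain ⟨β, hβne, hβroot⟩ := exists_ne_zero_root B hnb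
  obtain ⟨w, hwne, hwk⟩ := eigvec_of_root B hβroot
  set s0 := (minpoly F A).rootMultiplicity 0 with hs0
  rw [show (A - (0:F) • 1) = A from by rw [zero_smul, sub_zero]] at hu0 hu1
  rw [show (X : F[X]) = X - C 0 from by rw [_root_.map_zero, sub_zero]]
  apply key_dvd (A ⊗ₖ B) 0 (kv u w) s0 s0
  · rw [show ((A ⊗ₖ B) - (0:F) • 1) = A ⊗ₖ B from by rw [zero_smul, sub_zero], kron_pow,
      kron_mulVec, hu0, kv_zero_left]
  · rw [show ((A ⊗ₖ B) - (0:F) • 1) = A ⊗ₖ B from by rw [zero_smul, sub_zero], kron_pow,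
      kron_mulVec, hwk, kv_smul_right]
    exact smul_ne_zero (pow_ne_zero _ hβne) (kv_ne_zero hu1 hwne)

lemma rho_dvd_min [IsAlgClosed F] [Nonempty n] [Nonempty m]
    (A : Matrix n n F) (B : Matrix m m F)
    (ha : ∃ k, minpoly F A = X ^ k) (hb : ∃ k, minpoly F B = X ^ k) :
    X ^ (min ((minpoly F A).rootMultiplicity 0) ((minpoly F B).rootMultiplicity 0)) ∣
      minpoly F (A ⊗ₖ B) := by
  set s0 := (minpoly F A).rootMultiplicity 0 with hs0
  set t0 := (minpoly F B).rootMultiplicity 0 with ht0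
  have hdegA := minpoly.natDegree_pos (Matrix.isIntegral A)
  have hdegB := minpoly.natDegree_pos (Matrix.isIntegral B)
  have hsApos : 0 < s0 := by
    have := nilp_eq_pow ha; rw [this, natDegree_X_pow] at hdegA; exact hdegA
  have htBpos : 0 < t0 := by
    have := nilp_eq_pow hb; rw [this, natDegree_X_pow] at hdegB; exact hdegB
  have hA0 : (minpoly F A).IsRoot 0 :=
    (Polynomial.rootMultiplicity_pos (minpoly.ne_zero (Matrix.isIntegral A))).mp hsApos
  have hB0 : (minpoly F B).IsRoot 0 :=
    (Polynomial.rootMultiplicity_pos (minpoly.ne_zero (Matrix.isIntegral B))).mp htBpos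
  obtain ⟨u, hu0, hu1⟩ := exists_cyclic A hA0
  obtain ⟨w, hw0, hw1⟩ := exists_cyclic B hB0
  rw [show (A - (0:F) • 1) = A from by rw [zero_smul, sub_zero]] at hu0 hu1
  rw [show (B - (0:F) • 1) = B from by rw [zero_smul, sub_zero]] at hw0 hw1
  rw [show (X : F[X]) = X - C 0 from by rw [_root_.map_zero, sub_zero]]
  apply key_dvd (A ⊗ₖ B) 0 (kv u w) (min s0 t0) (min s0 t0)
  · rw [show ((A ⊗ₖ B) - (0:F) • 1) = A ⊗ₖ B from by rw [zero_smul, sub_zero], kron_pow,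
      kron_mulVec]
    rcases le_total s0 t0 with h | h
    · rw [pow_mulVec_eq_zero_of_le hu0 (by omega), kv_zero_left]
    · rw [pow_mulVec_eq_zero_of_le hw0 (by omega), kv_zero_right]
  · rw [show ((A ⊗ₖ B) - (0:F) • 1) = A ⊗ₖ B from by rw [zero_smul, sub_zero], kron_pow,
      kron_mulVec]
    exact kv_ne_zero (pow_mulVec_ne_zero_of_le hu1 (by omega))
      (pow_mulVec_ne_zero_of_le hw1 (by omega))

end Helpers


open scoped Classical in
/-- Let `F` be an algebraically closed field and `A`, `B` square matrices over `F` of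
positive sizes.  For `γ ∈ F` let `ι_A(γ)` be the multiplicity of `γ` as a root of the
minimal polynomial of `A`; call a matrix nilpotent if its minimal polynomial is a power
of `X`, and set `ρ = min(ι_A(0), ι_B(0))` if both `A` and `B` are nilpotent, `ρ = ι_A(0)`
if only `A` is nilpotent, `ρ = ι_B(0)` if only `B` is nilpotent, and
`ρ = max(ι_A(0), ι_B(0))` otherwise.  Then the minimal polynomial of `A ⊗ B` equals
`X ^ ρ * Q`, where `Q` is the monic least common multiple of the polynomials
`(X − αβ) ^ (ι_A(α) ∧ ι_B(β))` over all nonzero roots `α` of `minpoly F A` and all nonzero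
roots `β` of `minpoly F B`. -/
theorem minpoly_kronecker (F : Type*) [Field F] [IsAlgClosed F] (n m : ℕ)
    (hn : 0 < n) (hm : 0 < m)
    (A : Matrix (Fin n) (Fin n) F) (B : Matrix (Fin m) (Fin m) F) :
    minpoly F (A ⊗ₖ B) =
      X ^ (if ∃ k, minpoly F A = X ^ k then
             if ∃ k, minpoly F B = X ^ k then
               min ((minpoly F A).rootMultiplicity 0) ((minpoly F B).rootMultiplicity 0)
             else (minpoly F A).rootMultiplicity 0
           else if ∃ k, minpoly F B = X ^ k then (minpoly F B).rootMultiplicity 0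
           else max ((minpoly F A).rootMultiplicity 0) ((minpoly F B).rootMultiplicity 0)) *
      (((minpoly F A).roots.toFinset.filter (· ≠ 0)) ×ˢ
          ((minpoly F B).roots.toFinset.filter (· ≠ 0))).lcm
        (fun p => (X - C (p.1 * p.2)) ^
          wedge F ((minpoly F A).rootMultiplicity p.1) ((minpoly F B).rootMultiplicity p.2)) := by
  haveI : Nonempty (Fin n) := Fin.pos_iff_nonempty.mp hn
  haveI : Nonempty (Fin m) := Fin.pos_iff_nonempty.mp hm
  set M := A ⊗ₖ B with hM
  set PA := minpoly F A with hPA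
  set PB := minpoly F B with hPB
  set s0 := PA.rootMultiplicity 0 with hs0
  set t0 := PB.rootMultiplicity 0 with ht0
  set SS := ((PA.roots.toFinset.filter (· ≠ 0)) ×ˢ (PB.roots.toFinset.filter (· ≠ 0)))
    with hSS
  set L := SS.lcm
    (fun p => (X - C (p.1 * p.2)) ^ wedge F (PA.rootMultiplicity p.1) (PB.rootMultiplicity p.2))
    with hL
  set ρ := (if ∃ k, PA = X ^ k then if ∃ k, PB = X ^ k then min s0 t0 else s0
    else if ∃ k, PB = X ^ k then t0 else max s0 t0) with hρ
  have hintM : IsIntegral F M := Matrix.isIntegral M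
  have hPAne : PA ≠ 0 := minpoly.ne_zero (Matrix.isIntegral A)
  have hPBne : PB ≠ 0 := minpoly.ne_zero (Matrix.isIntegral B)
  -- nonzero roots rule out nilpotency
  have hnonnilpA : ∀ γ : F, γ ≠ 0 → PA.IsRoot γ → ¬ (∃ k, PA = X ^ k) := by
    rintro γ hγ hr ⟨k, hk⟩
    rw [hk] at hr
    simp only [Polynomial.IsRoot, eval_pow, eval_X] at hr
    cases k with
    | zero => simp at hr
    | succ k => exact hγ ((pow_eq_zero_iff (Nat.succ_ne_zero k)).mp hr)
  have hnonnilpB : ∀ γ : F, γ ≠ 0 → PB.IsRoot γ → ¬ (∃ k, PB = X ^ k) := by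
    rintro γ hγ hr ⟨k, hk⟩
    rw [hk] at hr
    simp only [Polynomial.IsRoot, eval_pow, eval_X] at hr
    cases k with
    | zero => simp at hr
    | succ k => exact hγ ((pow_eq_zero_iff (Nat.succ_ne_zero k)).mp hr)
  -- (I) upper bound : aeval M (X ^ ρ * L) = 0
  have hupper : (aeval M (X ^ ρ * L)) = 0 := by
    apply matrix_eq_zero
    rintro ⟨a, b⟩
    rw [single_prod_eq_kv]
    obtain ⟨vA, hvA, hAdec⟩ := decomp A (Pi.single a 1)
    obtain ⟨vB, hvB, hBdec⟩ := decomp B (Pi.single b 1)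
    rw [hAdec, hBdec, kv_sum_sum, mulVec_sum']
    refine Finset.sum_eq_zero fun α hα => ?_
    rw [mulVec_sum']
    refine Finset.sum_eq_zero fun β hβ => ?_
    have hαroot : PA.IsRoot α := Polynomial.isRoot_of_mem_roots (Multiset.mem_toFinset.mp hα)
    have hβroot : PB.IsRoot β := Polynomial.isRoot_of_mem_roots (Multiset.mem_toFinset.mp hβ)
    by_cases hα0 : α = 0
    · subst hα0
      have hu : (A ^ s0) *ᵥ vA 0 = 0 := by
        have hu0 := hvA 0
        rw [show (A - (0:F) • 1) = A from by rw [zero_smul, sub_zero]] at hu0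
        exact hu0
      apply annih_of_dvd M (X ^ ρ) _ (dvd_mul_right _ _)
      rw [map_pow, aeval_X, hM, kron_pow, kron_mulVec]
      by_cases hβ0 : β = 0
      · subst hβ0
        have hw : (B ^ t0) *ᵥ vB 0 = 0 := by
          have hw0 := hvB 0
          rw [show (B - (0:F) • 1) = B from by rw [zero_smul, sub_zero]] at hw0
          exact hw0
        have hminρ : min s0 t0 ≤ ρ := by
          rw [hρ]; split_ifs <;> omega
        rcases le_total s0 t0 with h | h
        · rw [pow_mulVec_eq_zero_of_le hu (by omega), kv_zero_left]
        · rw [pow_mulVec_eq_zero_of_le hw (by omega), kv_zero_right]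
      · have hnb : ¬ (∃ k, PB = X ^ k) := hnonnilpB β hβ0 hβroot
        have hs0ρ : s0 ≤ ρ := by
          rw [hρ]
          by_cases hA' : ∃ k, PA = X ^ k
          · rw [if_pos hA', if_neg hnb]
          · rw [if_neg hA', if_neg hnb]; exact le_max_left _ _
        rw [pow_mulVec_eq_zero_of_le hu hs0ρ, kv_zero_left]
    · by_cases hβ0 : β = 0
      · subst hβ0
        have hw : (B ^ t0) *ᵥ vB 0 = 0 := by
          have hw0 := hvB 0
          rw [show (B - (0:F) • 1) = B from by rw [zero_smul, sub_zero]] at hw0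
          exact hw0
        have hna : ¬ (∃ k, PA = X ^ k) := hnonnilpA α hα0 hαroot
        have ht0ρ : t0 ≤ ρ := by
          rw [hρ]
          by_cases hB' : ∃ k, PB = X ^ k
          · rw [if_neg hna, if_pos hB']
          · rw [if_neg hna, if_neg hB']; exact le_max_right _ _
        apply annih_of_dvd M (X ^ ρ) _ (dvd_mul_right _ _)
        rw [map_pow, aeval_X, hM, kron_pow, kron_mulVec]
        rw [pow_mulVec_eq_zero_of_le hw ht0ρ, kv_zero_right]
      · have hmem : (α, β) ∈ SS := by
          rw [hSS]
          refine Finset.mem_product.mpr ⟨?_, ?_⟩ <;> rw [Finset.mem_filter]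
          · exact ⟨hα, hα0⟩
          · exact ⟨hβ, hβ0⟩
        apply annih_of_dvd M _ _ (dvd_mul_of_dvd_right (Finset.dvd_lcm hmem) (X ^ ρ))
        rw [aeval_X_sub_C_pow]
        exact core_upper A B α β (hvA α) (hvB β)
  -- (II) X ^ ρ ∣ minpoly F M
  have hXdvd : X ^ ρ ∣ minpoly F M := by
    by_cases hA' : ∃ k, PA = X ^ k <;> by_cases hB' : ∃ k, PB = X ^ k
    · rw [hρ, if_pos hA', if_pos hB']
      exact rho_dvd_min A B hA' hB'
    · rw [hρ, if_pos hA', if_neg hB']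
      have hsApos : 0 < s0 := by
        have hdegA : 0 < PA.natDegree := minpoly.natDegree_pos (Matrix.isIntegral A)
        have h : PA = X ^ s0 := nilp_eq_pow hA'
        rw [h, natDegree_X_pow] at hdegA
        exact hdegA
      exact rho_dvd_nilp_nonnilp A B
        ((Polynomial.rootMultiplicity_pos hPAne).mp hsApos) hB'
    · rw [hρ, if_neg hA', if_pos hB', hM, minpoly_kron_comm]
      have htBpos : 0 < t0 := by
        have hdegB : 0 < PB.natDegree := minpoly.natDegree_pos (Matrix.isIntegral B)
        have h : PB = X ^ t0 := nilp_eq_pow hB'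
        rw [h, natDegree_X_pow] at hdegB
        exact hdegB
      exact rho_dvd_nilp_nonnilp B A
        ((Polynomial.rootMultiplicity_pos hPBne).mp htBpos) hA'
    · rw [hρ, if_neg hA', if_neg hB']
      rcases Nat.eq_zero_or_pos (max s0 t0) with h0 | hpos
      · rw [h0, pow_zero]; exact one_dvd _
      · rcases le_total t0 s0 with h | h
        · rw [max_eq_left h]
          have hsApos : 0 < s0 := by omega
          exact rho_dvd_nilp_nonnilp A B
            ((Polynomial.rootMultiplicity_pos hPAne).mp hsApos) hB'
        · rw [max_eq_right h, hM, minpoly_kron_comm]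
          have htBpos : 0 < t0 := by omega
          exact rho_dvd_nilp_nonnilp B A
            ((Polynomial.rootMultiplicity_pos hPBne).mp htBpos) hA'
  -- (III) L ∣ minpoly F M
  have hLdvd : L ∣ minpoly F M := by
    rw [hL]
    refine Finset.lcm_dvd fun p hp => ?_
    obtain ⟨hp1, hp2⟩ := Finset.mem_product.mp hp
    rw [Finset.mem_filter] at hp1 hp2
    obtain ⟨hα, hα0⟩ := hp1
    obtain ⟨hβ, hβ0⟩ := hp2
    have hαroot : PA.IsRoot p.1 := Polynomial.isRoot_of_mem_roots (Multiset.mem_toFinset.mp hα)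
    have hβroot : PB.IsRoot p.2 := Polynomial.isRoot_of_mem_roots (Multiset.mem_toFinset.mp hβ)
    have hspos : 0 < PA.rootMultiplicity p.1 :=
      (Polynomial.rootMultiplicity_pos hPAne).mpr hαroot
    have htpos : 0 < PB.rootMultiplicity p.2 :=
      (Polynomial.rootMultiplicity_pos hPBne).mpr hβroot
    obtain ⟨u, hu0, hu1⟩ := exists_cyclic A hαroot
    obtain ⟨w, hw0, hw1⟩ := exists_cyclic B hβroot
    exact key_dvd M (p.1 * p.2) (kv u w) _ _
      (core_upper A B p.1 p.2 hu0 hw0)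
      (core_lower A B (by simpa using hα0) (by simpa using hβ0) hspos htpos hu0 hu1 hw0 hw1)
  -- coprimality
  have hcop : IsCoprime ((X : F[X]) ^ ρ) L := by
    apply IsCoprime.pow_left
    have hdvdprod : L ∣ ∏ p ∈ SS,
        (X - C (p.1 * p.2)) ^ wedge F (PA.rootMultiplicity p.1) (PB.rootMultiplicity p.2) :=
      Finset.lcm_dvd fun p hp => Finset.dvd_prod_of_mem _ hp
    refine IsCoprime.of_isCoprime_of_dvd_right ?_ hdvdprod
    refine IsCoprime.prod_right fun p hp => ?_
    apply IsCoprime.pow_right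
    obtain ⟨hp1, hp2⟩ := Finset.mem_product.mp hp
    rw [Finset.mem_filter] at hp1 hp2
    have hne : p.1 * p.2 ≠ 0 := mul_ne_zero (by simpa using hp1.2) (by simpa using hp2.2)
    have := Polynomial.isCoprime_X_sub_C_of_isUnit_sub (R := F) (a := 0) (b := p.1 * p.2)
      (isUnit_iff_ne_zero.mpr (by rw [zero_sub, neg_ne_zero]; exact hne))
    simpa using this
  -- monicity of the right hand side
  have hLne : L ≠ 0 := by
    rw [hL]
    intro h
    rw [Finset.lcm_eq_zero_iff] at h
    obtain ⟨p, hp, hp0⟩ := h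
    exact pow_ne_zero _ (Polynomial.X_sub_C_ne_zero _) hp0
  have hLmonic : L.Monic := by
    have h := Polynomial.monic_normalize hLne
    rwa [hL, Finset.normalize_lcm, ← hL] at h
  exact Polynomial.eq_of_monic_of_associated (minpoly.monic hintM)
    ((monic_X_pow ρ).mul hLmonic)
    (associated_of_dvd_dvd (minpoly.dvd F M hupper) (hcop.mul_dvd hXdvd hLdvd))
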